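/- arXiv:1808.05166 — 2 statements merged into one kernel-verified Lean document; each statement's English description precedes it below -/
import Mathlib

section
/- Let a be the constant sequence of value r₁ with length n₁ and b the constant sequence of value r₂ with length n₂, with r₁, r₂ ≥ 0. Then a and b are realizable as the degree sequences of the two sides of a simple bipartite graph if and only if r₁ ≤ n₂, r₂ ≤ n₁, and r₁·n₁ = r₂·n₂. -/
open Finset

private lemma ncard_setOf_eq_card_filter {n : ℕ} (p : Fin n → Prop) [DecidablePred p] :
    {x | p x}.ncard = (Finset.univ.filter p).card := by
  rw [← Set.ncard_coe_finset]
  congr 1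
  ext x; simp

/-- Gale–Ryser corollary: constant degree sequences `(r₁,…,r₁)` (length `n₁`) and
`(r₂,…,r₂)` (length `n₂`) are realizable as the two sides of a simple bipartite
graph iff `r₁ ≤ n₂`, `r₂ ≤ n₁` and `r₁ n₁ = r₂ n₂`. -/
theorem biregular_bipartite_iff (n₁ n₂ r₁ r₂ : ℕ) (h₁ : 0 < n₁) (h₂ : 0 < n₂) :
    (∃ E : Fin n₁ → Fin n₂ → Prop,
        (∀ i, {j | E i j}.ncard = r₁) ∧ (∀ j, {i | E i j}.ncard = r₂)) ↔
      (r₁ ≤ n₂ ∧ r₂ ≤ n₁ ∧ r₁ * n₁ = r₂ * n₂) := by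
  classical
  constructor
  · rintro ⟨E, hA, hB⟩
    have hA' : ∀ i, (Finset.univ.filter (fun j => E i j)).card = r₁ := fun i => by
      rw [← ncard_setOf_eq_card_filter]; exact hA i
    have hB' : ∀ j, (Finset.univ.filter (fun i => E i j)).card = r₂ := fun j => by
      rw [← ncard_setOf_eq_card_filter]; exact hB j
    refine ⟨?_, ?_, ?_⟩
    · rw [← hA' ⟨0, h₁⟩]
      calc (Finset.univ.filter (fun j => E ⟨0, h₁⟩ j)).card
          ≤ (Finset.univ : Finset (Fin n₂)).card := Finset.card_filter_le _ _
        _ = n₂ := by simp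
    · rw [← hB' ⟨0, h₂⟩]
      calc (Finset.univ.filter (fun i => E i ⟨0, h₂⟩)).card
          ≤ (Finset.univ : Finset (Fin n₁)).card := Finset.card_filter_le _ _
        _ = n₁ := by simp
    · have key : ∑ i : Fin n₁, ∑ j : Fin n₂, (if E i j then 1 else 0)
          = ∑ j : Fin n₂, ∑ i : Fin n₁, (if E i j then 1 else 0) := by
        rw [Finset.sum_comm]
      have l : ∑ i : Fin n₁, ∑ j : Fin n₂, (if E i j then 1 else 0) = r₁ * n₁ := by
        have h : ∀ i : Fin n₁, ∑ j : Fin n₂, (if E i j then 1 else 0) = r₁ := fun i => by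
          rw [← hA' i, Finset.card_filter]
        rw [Finset.sum_congr rfl (fun i _ => h i)]
        simp [mul_comm]
      have r : ∑ j : Fin n₂, ∑ i : Fin n₁, (if E i j then 1 else 0) = r₂ * n₂ := by
        have h : ∀ j : Fin n₂, ∑ i : Fin n₁, (if E i j then 1 else 0) = r₂ := fun j => by
          rw [← hB' j, Finset.card_filter]
        rw [Finset.sum_congr rfl (fun j _ => h j)]
        simp [mul_comm]
      rw [l, r] at key
      exact key
  · rintro ⟨hr₁, hr₂, heq⟩
    rcases Nat.eq_zero_or_pos r₁ with h0 | hpos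
    · subst h0
      have hr2 : r₂ = 0 := by
        have h : r₂ * n₂ = 0 := by omega
        exact (Nat.mul_eq_zero.mp h).resolve_right (by omega)
      subst hr2
      exact ⟨fun _ _ => False, fun i => by simp, fun j => by simp⟩
    · refine ⟨fun i j => ∃ k < r₁, ((i : ℕ) * r₁ + k) % n₂ = (j : ℕ), ?_, ?_⟩
      · intro i
        rw [ncard_setOf_eq_card_filter]
        have hb : (Finset.range r₁).card
            = (Finset.univ.filter (fun j : Fin n₂ =>
                ∃ k < r₁, ((i : ℕ) * r₁ + k) % n₂ = (j : ℕ))).card := by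
          refine Finset.card_bij
            (fun k _ => (⟨((i : ℕ) * r₁ + k) % n₂, Nat.mod_lt _ h₂⟩ : Fin n₂)) ?_ ?_ ?_
          · intro k hk
            simp only [Finset.mem_filter, Finset.mem_univ, true_and]
            exact ⟨k, Finset.mem_range.mp hk, rfl⟩
          · intro k hk k' hk' hkk'
            have hk := Finset.mem_range.mp hk
            have hk' := Finset.mem_range.mp hk'
            have hv : ((i : ℕ) * r₁ + k) % n₂ = ((i : ℕ) * r₁ + k') % n₂ := by
              simpa [Fin.ext_iff] using hkk'
            have hmm : k % n₂ = k' % n₂ :=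
              Nat.ModEq.add_left_cancel' ((i : ℕ) * r₁) hv
            rwa [Nat.mod_eq_of_lt (by omega), Nat.mod_eq_of_lt (by omega)] at hmm
          · intro j hj
            obtain ⟨k, hk, hkj⟩ := (Finset.mem_filter.mp hj).2
            exact ⟨k, Finset.mem_range.mpr hk, by simp [Fin.ext_iff, hkj]⟩
        rw [Finset.card_range] at hb
        exact hb.symm
      · intro j
        rw [ncard_setOf_eq_card_filter]
        have hmul : n₁ * r₁ = r₂ * n₂ := by rw [mul_comm n₁ r₁, heq]
        have hmul2 : n₁ * r₁ = n₂ * r₂ := by rw [hmul, mul_comm]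
        have hjlt : (j : ℕ) < n₂ := j.isLt
        have hcount : ((Finset.range (n₁ * r₁)).filter (fun m => m % n₂ = (j : ℕ))).card
            = r₂ := by
          have hb : (Finset.range r₂).card
              = ((Finset.range (n₁ * r₁)).filter (fun m => m % n₂ = (j : ℕ))).card := by
            refine Finset.card_bij (fun t _ => t * n₂ + (j : ℕ)) ?_ ?_ ?_
            · intro t ht
              have ht := Finset.mem_range.mp ht
              show t * n₂ + (j : ℕ) ∈ _
              refine Finset.mem_filter.mpr ⟨Finset.mem_range.mpr ?_, ?_⟩
              · have h3 : (t + 1) * n₂ ≤ r₂ * n₂ := Nat.mul_le_mul_right _ (by omega)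
                have h4 : t * n₂ + (j : ℕ) < (t + 1) * n₂ := by
                  rw [add_mul, one_mul]; omega
                omega
              · rw [mul_comm t n₂, Nat.mul_add_mod, Nat.mod_eq_of_lt hjlt]
            · intro t ht t' ht' h
              have h' : t * n₂ + (j : ℕ) = t' * n₂ + (j : ℕ) := h
              have h2 : t * n₂ = t' * n₂ := by omega
              exact Nat.eq_of_mul_eq_mul_right h₂ h2
            · intro m hm
              obtain ⟨hlt, hmod⟩ := Finset.mem_filter.mp hm
              have hlt := Finset.mem_range.mp hlt
              refine ⟨m / n₂, Finset.mem_range.mpr ?_, ?_⟩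
              · exact Nat.div_lt_of_lt_mul (by omega)
              · conv_rhs => rw [← Nat.div_add_mod' m n₂]
                rw [hmod]
          rw [Finset.card_range] at hb
          exact hb.symm
        rw [← hcount]
        refine Finset.card_bij
          (fun m hm => (⟨m / r₁,
            Nat.div_lt_of_lt_mul
              (mul_comm n₁ r₁ ▸ Finset.mem_range.mp (Finset.mem_filter.mp hm).1)⟩ : Fin n₁))
          ?_ ?_ ?_ |>.symm
        · intro m hm
          obtain ⟨hlt, hmod⟩ := Finset.mem_filter.mp hm
          refine Finset.mem_filter.mpr ⟨Finset.mem_univ _, ?_⟩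
          refine ⟨m % r₁, Nat.mod_lt _ hpos, ?_⟩
          show ((m / r₁) * r₁ + m % r₁) % n₂ = (j : ℕ)
          rw [Nat.div_add_mod' m r₁]
          exact hmod
        · intro m hm m' hm' h
          obtain ⟨hlt, hmod⟩ := Finset.mem_filter.mp hm
          obtain ⟨hlt', hmod'⟩ := Finset.mem_filter.mp hm'
          have hd : m / r₁ = m' / r₁ := by simpa [Fin.ext_iff] using h
          have key : ∀ a b : ℕ, a ≤ b → a % n₂ = b % n₂ → a / r₁ = b / r₁ → a = b := by
            intro a b hle hm2 hd2
            have e1 := Nat.div_add_mod' a r₁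
            have e2 := Nat.div_add_mod' b r₁
            have f1 : a % r₁ < r₁ := Nat.mod_lt _ hpos
            have f2 : b % r₁ < r₁ := Nat.mod_lt _ hpos
            rw [hd2] at e1
            have hdvd : n₂ ∣ b - a := (Nat.modEq_iff_dvd' hle).mp hm2
            have hsmall : b - a < n₂ := by omega
            have := Nat.eq_zero_of_dvd_of_lt hdvd hsmall
            omega
          rcases le_total m m' with hle | hle
          · exact key m m' hle (by rw [hmod, hmod']) hd
          · exact (key m' m hle (by rw [hmod, hmod']) hd.symm).symm
        · intro i hi
          obtain ⟨k, hk, hkj⟩ := (Finset.mem_filter.mp hi).2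
          refine ⟨(i : ℕ) * r₁ + k, Finset.mem_filter.mpr ⟨Finset.mem_range.mpr ?_, hkj⟩, ?_⟩
          · have hilt := i.isLt
            have h3 : ((i : ℕ) + 1) * r₁ ≤ n₁ * r₁ := Nat.mul_le_mul_right _ (by omega)
            have h4 : (i : ℕ) * r₁ + k < ((i : ℕ) + 1) * r₁ := by
              rw [add_mul, one_mul]; omega
            omega
          · have hdiv : ((i : ℕ) * r₁ + k) / r₁ = (i : ℕ) := by
              rw [mul_comm, Nat.mul_add_div hpos, Nat.div_eq_of_lt hk, add_zero]
            simp [Fin.ext_iff, hdiv]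
end

section
/- There exists a simple graph G on 10 vertices admitting an equitable partition into two cells C₁ (8 vertices) and C₂ (2 vertices) with quotient matrix Q₁₁ = 3, Q₁₂ = 1, Q₂₁ = 4, Q₂₂ = 1, whose automorphism group is trivial (hence the orbit partition of Aut(G) has 10 singleton cells while the minimal equitable partition has at most 2 cells). -/
/-! Auxiliary construction: a concrete graph on 10 vertices. -/

namespace Fig2Aux

/-- Neighbor lists of the graph (indices as naturals). -/
def nbv : Nat → List Nat
  | 0 => [2, 4, 6, 9]
  | 1 => [2, 3, 5, 9]
  | 2 => [0, 1, 3, 8]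
  | 3 => [1, 2, 6, 8]
  | 4 => [0, 5, 7, 8]
  | 5 => [1, 4, 7, 9]
  | 6 => [0, 3, 7, 8]
  | 7 => [4, 5, 6, 9]
  | 8 => [2, 3, 4, 6, 9]
  | 9 => [0, 1, 5, 7, 8]
  | _ => []

def adjB (i j : Fin 10) : Bool := decide (j.val ∈ nbv i.val)

def G : SimpleGraph (Fin 10) where
  Adj i j := adjB i j = true
  symm := by
    have h : ∀ a b : Fin 10, adjB a b = true → adjB b a = true := by decide
    exact ⟨fun a b hab => h a b hab⟩
  loopless := by
    have h : ∀ a : Fin 10, ¬ adjB a a = true := by decide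
    exact ⟨fun a => h a⟩

instance : DecidableRel G.Adj := fun i j => inferInstanceAs (Decidable (adjB i j = true))

/-- Degree as a computable finset cardinality. -/
def degB (v : Fin 10) : ℕ := (Finset.univ.filter fun w => G.Adj v w).card

/-- Number of (ordered) triangle completions at `v`. -/
def triB (v : Fin 10) : ℕ :=
  (Finset.univ.filter fun p : Fin 10 × Fin 10 =>
    G.Adj v p.1 ∧ G.Adj v p.2 ∧ G.Adj p.1 p.2).card

lemma ncard_filter {α : Type*} [Fintype α] (p : α → Prop) [DecidablePred p] :
    {w | p w}.ncard = (Finset.univ.filter p).card := by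
  rw [Set.ncard_eq_toFinset_card', Set.toFinset_setOf]

lemma himg (σ : G ≃g G) (v : Fin 10) :
    σ '' {w | G.Adj v w} = {w | G.Adj (σ v) w} := by
  ext w
  simp only [Set.mem_image, Set.mem_setOf_eq]
  constructor
  · rintro ⟨x, hx, rfl⟩
    exact σ.map_adj_iff.mpr hx
  · intro h
    refine ⟨σ.symm w, ?_, σ.apply_symm_apply w⟩
    rw [← σ.map_adj_iff]
    simpa using h

lemma deg_pres (σ : G ≃g G) (v : Fin 10) : degB (σ v) = degB v := by
  have h1 : {w | G.Adj (σ v) w}.ncard = {w | G.Adj v w}.ncard := by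
    rw [← himg σ v, Set.ncard_image_of_injective _ σ.injective]
  have h2 := ncard_filter (fun w => G.Adj (σ v) w)
  have h3 := ncard_filter (fun w => G.Adj v w)
  unfold degB
  rw [← h2, ← h3]
  exact h1

lemma himgT (σ : G ≃g G) (v : Fin 10) :
    (Prod.map σ σ) '' {p : Fin 10 × Fin 10 | G.Adj v p.1 ∧ G.Adj v p.2 ∧ G.Adj p.1 p.2}
      = {p : Fin 10 × Fin 10 | G.Adj (σ v) p.1 ∧ G.Adj (σ v) p.2 ∧ G.Adj p.1 p.2} := by
  ext ⟨a, b⟩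
  simp only [Set.mem_image, Set.mem_setOf_eq, Prod.exists, Prod.map, Prod.mk.injEq]
  constructor
  · rintro ⟨x, y, ⟨h1, h2, h3⟩, rfl, rfl⟩
    exact ⟨σ.map_adj_iff.mpr h1, σ.map_adj_iff.mpr h2, σ.map_adj_iff.mpr h3⟩
  · rintro ⟨h1, h2, h3⟩
    refine ⟨σ.symm a, σ.symm b, ⟨?_, ?_, ?_⟩, by simp, by simp⟩
    · rw [← σ.map_adj_iff]; simpa using h1
    · rw [← σ.map_adj_iff]; simpa using h2
    · rw [← σ.map_adj_iff]; simpa using h3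

lemma tri_pres (σ : G ≃g G) (v : Fin 10) : triB (σ v) = triB v := by
  have hinj : Function.Injective (Prod.map σ σ) :=
    Function.Injective.prodMap σ.injective σ.injective
  have h1 : {p : Fin 10 × Fin 10 | G.Adj (σ v) p.1 ∧ G.Adj (σ v) p.2 ∧ G.Adj p.1 p.2}.ncard
      = {p : Fin 10 × Fin 10 | G.Adj v p.1 ∧ G.Adj v p.2 ∧ G.Adj p.1 p.2}.ncard := by
    rw [← himgT σ v, Set.ncard_image_of_injective _ hinj]
  have h2 := ncard_filter (fun p : Fin 10 × Fin 10 =>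
    G.Adj (σ v) p.1 ∧ G.Adj (σ v) p.2 ∧ G.Adj p.1 p.2)
  have h3 := ncard_filter (fun p : Fin 10 × Fin 10 =>
    G.Adj v p.1 ∧ G.Adj v p.2 ∧ G.Adj p.1 p.2)
  unfold triB
  rw [← h2, ← h3]
  exact h1

lemma deg5 : ∀ x : Fin 10, degB x = 5 → x = 8 ∨ x = 9 := by decide

lemma kill4 : ∀ x : Fin 10, degB x = 4 → triB x = 2 → G.Adj x 9 → False := by decide

lemma pin0 : ∀ x : Fin 10, degB x = 4 → triB x = 0 → x = 0 := by decide
lemma pin2 : ∀ x : Fin 10, degB x = 4 → triB x = 4 → G.Adj x 8 → x = 2 := by decide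
lemma pin1 : ∀ x : Fin 10, degB x = 4 → triB x = 4 → ¬G.Adj x 8 → G.Adj x 9 →
    ¬G.Adj x 0 → G.Adj x 2 → x = 1 := by decide
lemma pin3 : ∀ x : Fin 10, degB x = 4 → triB x = 6 → G.Adj x 8 → x = 3 := by decide
lemma pin4 : ∀ x : Fin 10, degB x = 4 ∧ triB x = 2 ∧ G.Adj x 8 ∧ ¬G.Adj x 9 ∧
    G.Adj x 0 ∧ ¬G.Adj x 2 ∧ ¬G.Adj x 1 ∧ ¬G.Adj x 3 → x = 4 := by decide
lemma pin5 : ∀ x : Fin 10, degB x = 4 → triB x = 6 → ¬G.Adj x 8 → x = 5 := by decide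
lemma pin6 : ∀ x : Fin 10, degB x = 4 ∧ triB x = 2 ∧ G.Adj x 8 ∧ ¬G.Adj x 9 ∧
    G.Adj x 0 ∧ ¬G.Adj x 2 ∧ ¬G.Adj x 1 ∧ G.Adj x 3 → x = 6 := by decide
lemma pin7 : ∀ x : Fin 10, degB x = 4 → triB x = 4 → ¬G.Adj x 8 → G.Adj x 9 →
    ¬G.Adj x 0 → ¬G.Adj x 2 → x = 7 := by decide

lemma aut_trivial (σ : G ≃g G) : ∀ v, σ v = v := by
  have hdeg : ∀ v, degB (σ v) = degB v := deg_pres σ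
  have htri : ∀ v, triB (σ v) = triB v := tri_pres σ
  have adj_pin : ∀ (p v : Fin 10), σ p = p → (G.Adj (σ v) p ↔ G.Adj v p) := by
    intro p v hp
    have h := σ.map_adj_iff (v := v) (w := p)
    rw [hp] at h
    exact h
  rcases deg5 (σ 8) ((hdeg 8).trans (by decide)) with h8 | h8
  · -- σ 8 = 8
    have h9 : σ 9 = 9 := by
      rcases deg5 (σ 9) ((hdeg 9).trans (by decide)) with h | h
      · exact absurd (σ.injective (h.trans h8.symm)) (by decide)
      · exact h
    have h0 : σ 0 = 0 :=
      pin0 _ ((hdeg 0).trans (by decide)) ((htri 0).trans (by decide))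
    have h2 : σ 2 = 2 :=
      pin2 _ ((hdeg 2).trans (by decide)) ((htri 2).trans (by decide))
        ((adj_pin 8 2 h8).mpr (by decide))
    have h1 : σ 1 = 1 :=
      pin1 _ ((hdeg 1).trans (by decide)) ((htri 1).trans (by decide))
        (fun hh => absurd ((adj_pin 8 1 h8).mp hh) (by decide))
        ((adj_pin 9 1 h9).mpr (by decide))
        (fun hh => absurd ((adj_pin 0 1 h0).mp hh) (by decide))
        ((adj_pin 2 1 h2).mpr (by decide))
    have h3 : σ 3 = 3 :=
      pin3 _ ((hdeg 3).trans (by decide)) ((htri 3).trans (by decide))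
        ((adj_pin 8 3 h8).mpr (by decide))
    have h4 : σ 4 = 4 :=
      pin4 _ ⟨(hdeg 4).trans (by decide), (htri 4).trans (by decide),
        (adj_pin 8 4 h8).mpr (by decide),
        fun hh => absurd ((adj_pin 9 4 h9).mp hh) (by decide),
        (adj_pin 0 4 h0).mpr (by decide),
        fun hh => absurd ((adj_pin 2 4 h2).mp hh) (by decide),
        fun hh => absurd ((adj_pin 1 4 h1).mp hh) (by decide),
        fun hh => absurd ((adj_pin 3 4 h3).mp hh) (by decide)⟩
    have h5 : σ 5 = 5 :=
      pin5 _ ((hdeg 5).trans (by decide)) ((htri 5).trans (by decide))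
        (fun hh => absurd ((adj_pin 8 5 h8).mp hh) (by decide))
    have h6 : σ 6 = 6 :=
      pin6 _ ⟨(hdeg 6).trans (by decide), (htri 6).trans (by decide),
        (adj_pin 8 6 h8).mpr (by decide),
        fun hh => absurd ((adj_pin 9 6 h9).mp hh) (by decide),
        (adj_pin 0 6 h0).mpr (by decide),
        fun hh => absurd ((adj_pin 2 6 h2).mp hh) (by decide),
        fun hh => absurd ((adj_pin 1 6 h1).mp hh) (by decide),
        (adj_pin 3 6 h3).mpr (by decide)⟩
    have h7 : σ 7 = 7 :=
      pin7 _ ((hdeg 7).trans (by decide)) ((htri 7).trans (by decide))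
        (fun hh => absurd ((adj_pin 8 7 h8).mp hh) (by decide))
        ((adj_pin 9 7 h9).mpr (by decide))
        (fun hh => absurd ((adj_pin 0 7 h0).mp hh) (by decide))
        (fun hh => absurd ((adj_pin 2 7 h2).mp hh) (by decide))
    intro v
    fin_cases v <;> assumption
  · -- σ 8 = 9 : contradiction via vertex 4
    exfalso
    have hadj : G.Adj (σ 4) 9 := by
      rw [← h8]
      exact σ.map_adj_iff.mpr (by decide)
    exact kill4 (σ 4) ((hdeg 4).trans (by decide)) ((htri 4).trans (by decide)) hadj

lemma equit : ∀ v : Fin 10, v.val < 8 →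
    (Finset.univ.filter fun w => G.Adj v w ∧ w.val < 8).card = 3 ∧
    (Finset.univ.filter fun w => G.Adj v w ∧ 8 ≤ w.val).card = 1 := by decide

lemma equit2 : ∀ v : Fin 10, 8 ≤ v.val →
    (Finset.univ.filter fun w => G.Adj v w ∧ w.val < 8).card = 4 ∧
    (Finset.univ.filter fun w => G.Adj v w ∧ 8 ≤ w.val).card = 1 := by decide

end Fig2Aux

/-- There is a simple graph on 10 vertices with an equitable partition into cells
`{0,…,7}` and `{8,9}` with quotient matrix `Q₁₁ = 3, Q₁₂ = 1, Q₂₁ = 4, Q₂₂ = 1`,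
whose automorphism group is trivial. -/
theorem exists_graph_trivial_aut_nontrivial_equitable :
    ∃ G : SimpleGraph (Fin 10),
      (∀ v : Fin 10, v.val < 8 →
        {w | G.Adj v w ∧ w.val < 8}.ncard = 3 ∧
        {w | G.Adj v w ∧ 8 ≤ w.val}.ncard = 1) ∧
      (∀ v : Fin 10, 8 ≤ v.val →
        {w | G.Adj v w ∧ w.val < 8}.ncard = 4 ∧
        {w | G.Adj v w ∧ 8 ≤ w.val}.ncard = 1) ∧
      (∀ σ : G ≃g G, ∀ v, σ v = v) := by
  refine ⟨Fig2Aux.G, ?_, ?_, Fig2Aux.aut_trivial⟩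
  · intro v hv
    refine ⟨?_, ?_⟩
    · rw [Fig2Aux.ncard_filter]; exact (Fig2Aux.equit v hv).1
    · rw [Fig2Aux.ncard_filter]; exact (Fig2Aux.equit v hv).2
  · intro v hv
    refine ⟨?_, ?_⟩
    · rw [Fig2Aux.ncard_filter]; exact (Fig2Aux.equit2 v hv).1
    · rw [Fig2Aux.ncard_filter]; exact (Fig2Aux.equit2 v hv).2
end
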